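/- Let M be an evolving sphere-like surface with parametrisation y(t,ξ) = ρ̃(t,x(ξ))x(ξ) and let f̂ : M → ℝ correspond to f̃ : I × S² → ℝ via f̃(t,x(ξ)) = f̂(t,y(t,ξ)). Let ṽ = vⁱ∂ᵢx on S² and v̂ = vⁱ∂ᵢy on M_t be related via the differential Dφ̃. Then the parametrised optical flow equation d_t^{V̂}f̂ + ∇_M f̂ · v̂ = 0 on M_t holds if and only if ∂_t f̃ + ∇_{S²}f̃ · ṽ = 0 on S². -/

import Mathlib

noncomputable section
open scoped RealInnerProductSpace
open Metric

abbrev E2 := EuclideanSpace ℝ (Fin 2)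
abbrev E3 := EuclideanSpace ℝ (Fin 3)

/-- Equivalence of the parametrised optical flow equation on the evolving sphere-like
surface `M_t` (parametrised by `y(t,ξ) = ρ(t, x(ξ)) • x(ξ)`) and the corresponding
equation on the unit sphere: with data `f̂` on `M` and `f̃` on `S²` related by
`f̃(t, x(ξ)) = f̂(t, y(t,ξ))`, and tangent fields `v̂ = vⁱ∂ᵢy`, `ṽ = vⁱ∂ᵢx` related via
the differential of `φ̃(t,·)`, one has
`d_t^V f̂ + ∇_M f̂ · v̂ = 0  ↔  ∂_t f̃ + ∇_{S²}f̃ · ṽ = 0`.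
Surface gradients paired with tangent vectors are expressed through gradients of
ambient extensions `fM`, `fS`. -/
theorem stmt10 (x : E2 → E3) (ρ : ℝ → E3 → ℝ) (fM fS : ℝ → E3 → ℝ)
    (ξ : E2) (t : ℝ)
    (hx : DifferentiableAt ℝ x ξ) (hsph : ∀ ζ, ‖x ζ‖ = 1)
    (hpos : ∀ s : ℝ, ∀ p : E3, p ≠ 0 → 0 < ρ s p)
    (hcomp : ∀ s : ℝ, ∀ ζ : E2, fS s (x ζ) = fM s (ρ s (x ζ) • x ζ))
    (hyd : DifferentiableAt ℝ (fun ζ => ρ t (x ζ) • x ζ) ξ)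
    (hfM : DifferentiableAt ℝ (fM t) (ρ t (x ξ) • x ξ))
    (hfS : DifferentiableAt ℝ (fS t) (x ξ))
    (v : Fin 2 → ℝ) :
    (deriv (fun s => fM s (ρ s (x ξ) • x ξ)) t
        + ⟪gradient (fM t) (ρ t (x ξ) • x ξ),
            ∑ i, v i • fderiv ℝ (fun ζ => ρ t (x ζ) • x ζ) ξ (EuclideanSpace.single i 1)⟫
      = 0)
    ↔ (deriv (fun s => fS s (x ξ)) t
        + ⟪gradient (fS t) (x ξ),
            ∑ i, v i • fderiv ℝ x ξ (EuclideanSpace.single i 1)⟫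
      = 0) := by
  have hderiv : (fun s => fM s (ρ s (x ξ) • x ξ)) = fun s => fS s (x ξ) := by
    funext s; exact (hcomp s ξ).symm
  have hgrad : ∀ u : E3, ∀ g : E3 → ℝ, ∀ p : E3, ⟪gradient g p, u⟫ = fderiv ℝ g p u := by
    intro u g p
    simp [gradient, InnerProductSpace.toDual_symm_apply]
  have hchainM : fderiv ℝ (fun ζ => fM t (ρ t (x ζ) • x ζ)) ξ
      = (fderiv ℝ (fM t) (ρ t (x ξ) • x ξ)).comp (fderiv ℝ (fun ζ => ρ t (x ζ) • x ζ) ξ) :=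
    fderiv_comp ξ hfM hyd
  have hchainS : fderiv ℝ (fun ζ => fS t (x ζ)) ξ
      = (fderiv ℝ (fS t) (x ξ)).comp (fderiv ℝ x ξ) := fderiv_comp ξ hfS hx
  have hfun : (fun ζ => fM t (ρ t (x ζ) • x ζ)) = fun ζ => fS t (x ζ) := by
    funext ζ; exact (hcomp t ζ).symm
  have hinner : ⟪gradient (fM t) (ρ t (x ξ) • x ξ),
      ∑ i, v i • fderiv ℝ (fun ζ => ρ t (x ζ) • x ζ) ξ (EuclideanSpace.single i 1)⟫
      = ⟪gradient (fS t) (x ξ), ∑ i, v i • fderiv ℝ x ξ (EuclideanSpace.single i 1)⟫ := by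
    rw [hgrad, hgrad, map_sum, map_sum]
    refine Finset.sum_congr rfl fun i _ => ?_
    have h1 : fderiv ℝ (fM t) (ρ t (x ξ) • x ξ)
        (fderiv ℝ (fun ζ => ρ t (x ζ) • x ζ) ξ (EuclideanSpace.single i 1))
        = fderiv ℝ (fun ζ => fM t (ρ t (x ζ) • x ζ)) ξ (EuclideanSpace.single i 1) := by
      rw [hchainM]; rfl
    have h2 : fderiv ℝ (fS t) (x ξ) (fderiv ℝ x ξ (EuclideanSpace.single i 1))
        = fderiv ℝ (fun ζ => fS t (x ζ)) ξ (EuclideanSpace.single i 1) := by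
      rw [hchainS]; rfl
    simp only [map_smul, smul_eq_mul, h1, h2, hfun]
  rw [hderiv, hinner]
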